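/- arXiv:2207.01748 — 2 statements merged into one kernel-verified Lean document; each statement's English description precedes it below -/
import Mathlib

section
/- Suppose the initial configuration (s_i^0, x_i, S_i, γ_i)_{1≤i≤N} satisfies, for every i ∈ {1,…,N}: s_m < s_i^0 < S_i, s_m < S_i < s_m·e^{R_M}, and γ_i > 0. Then the competition system of N differential equations has a unique global solution (s_1,…,s_N) defined on all of ℝ_+, and moreover for all t ≥ 0 and all i ∈ {1,…,N} the competition index satisfies 0 ≤ C_i^N(t) ≤ 1. -/
open MeasureTheory Set

/-- The pairwise competition potential
`C(s, s', d) = log(s'/s_m) / (2 R_M (1 + d²/σ_x²)) · (1 + tanh(log(s'/s)/σ_r))`. -/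
noncomputable def pot (sm RM σx σr s s' d : ℝ) : ℝ :=
  Real.log (s' / sm) / (2 * RM * (1 + d ^ 2 / σx ^ 2)) *
    (1 + Real.tanh (Real.log (s' / s) / σr))

/-- The competition index `C_i^N(t) = (1/(N-1)) Σ_{j≠i} C(s_i(t), s_j(t), |x_i - x_j|)`. -/
noncomputable def cIdx (sm RM σx σr : ℝ) {N : ℕ}
    (x : Fin N → EuclideanSpace ℝ (Fin 2)) (s : Fin N → ℝ → ℝ) (i : Fin N) (t : ℝ) : ℝ :=
  (1 / ((N : ℝ) - 1)) *
    ∑ j ∈ Finset.univ.erase i, pot sm RM σx σr (s i t) (s j t) (dist (x i) (x j))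

/-- `s : Fin N → ℝ → ℝ` is a global solution (on `ℝ₊`) of the competition system
`ds_i/dt = γ_i s_i (log(S_i/s_m)(1 − C_i^N(t)) − log(s_i/s_m))`, `s_i(0) = s_i^0`. -/
def IsCompetitionSol (sm RM σx σr : ℝ) {N : ℕ} (s0 : Fin N → ℝ)
    (x : Fin N → EuclideanSpace ℝ (Fin 2)) (Sa γ : Fin N → ℝ) (s : Fin N → ℝ → ℝ) : Prop :=
  ∀ i, s i 0 = s0 i ∧ ∀ t, 0 ≤ t →
    HasDerivWithinAt (s i)
      (γ i * s i t * (Real.log (Sa i / sm) * (1 - cIdx sm RM σx σr x s i t)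
        - Real.log (s i t / sm)))
      (Set.Ici 0) t

lemma tanh_lt_one' (x : ℝ) : Real.tanh x < 1 := by
  rw [Real.tanh_eq_sinh_div_cosh, div_lt_one (Real.cosh_pos x)]
  nlinarith [Real.cosh_sub_sinh x, Real.exp_pos (-x)]

lemma neg_one_lt_tanh' (x : ℝ) : -1 < Real.tanh x := by
  rw [Real.tanh_eq_sinh_div_cosh, lt_div_iff₀ (Real.cosh_pos x)]
  nlinarith [Real.cosh_add_sinh x, Real.exp_pos x]

lemma contDiff_tanh' : ContDiff ℝ 1 Real.tanh := by
  have h : Real.tanh = fun x => Real.sinh x / Real.cosh x :=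
    funext fun x => Real.tanh_eq_sinh_div_cosh x
  rw [h]
  exact Real.contDiff_sinh.div Real.contDiff_cosh fun x => (Real.cosh_pos x).ne'

lemma hasDerivAt_posPartSq (S x : ℝ) :
    HasDerivAt (fun y => (max (y - S) 0) ^ 2) (2 * max (x - S) 0) x := by
  rcases lt_trichotomy x S with h | h | h
  · have h0 : max (x - S) 0 = 0 := max_eq_right (by linarith)
    rw [h0, mul_zero]
    have : (fun y => (max (y - S) 0) ^ 2) =ᶠ[nhds x] fun _ => (0:ℝ) := by
      filter_upwards [Iio_mem_nhds h] with y hy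
      rw [max_eq_right (by simpa using le_of_lt hy : y - S ≤ 0)]; ring
    exact (hasDerivAt_const x (0:ℝ)).congr_of_eventuallyEq this
  · subst h
    have h0 : max (x - x) 0 = 0 := by simp
    rw [h0, mul_zero]
    rw [hasDerivAt_iff_isLittleO]
    rw [Asymptotics.isLittleO_iff]
    intro c hc
    filter_upwards [Metric.ball_mem_nhds x hc] with y hy
    have hxy : |y - x| < c := by simpa [Real.dist_eq] using hy
    have h1 : max (y - x) 0 ≤ |y - x| := max_le (le_abs_self _) (abs_nonneg _)
    have h2 : (0:ℝ) ≤ max (y - x) 0 := le_max_right _ _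
    simp only [sub_self, max_self, smul_zero, sub_zero]
    calc ‖(max (y - x) 0) ^ 2 - 0^2‖ = (max (y - x) 0)^2 := by
          simp [abs_of_nonneg (pow_nonneg h2 2)]
      _ ≤ |y - x| * |y - x| := by nlinarith
      _ ≤ c * ‖y - x‖ := by
          rw [Real.norm_eq_abs]
          exact mul_le_mul_of_nonneg_right hxy.le (abs_nonneg _)
  · have : (fun y => (max (y - S) 0) ^ 2) =ᶠ[nhds x] fun y => (y - S) ^ 2 := by
      filter_upwards [Ioi_mem_nhds h] with y hy
      rw [max_eq_left (by simpa using le_of_lt hy : 0 ≤ y - S)]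
    have hd : HasDerivAt (fun y : ℝ => (y - S) ^ 2) (2 * (x - S)) x := by
      simpa using (((hasDerivAt_id x).sub_const S).fun_pow 2)
    rw [max_eq_left (by linarith)]
    exact hd.congr_of_eventuallyEq this

noncomputable def ccF (sm RM σx σr : ℝ) {N : ℕ} (x : Fin N → EuclideanSpace ℝ (Fin 2))
    (v : Fin N → ℝ) (i : Fin N) : ℝ :=
  (1 / ((N : ℝ) - 1)) *
    ∑ j ∈ Finset.univ.erase i, pot sm RM σx σr (v i) (v j) (dist (x i) (x j))

noncomputable def fld (sm RM σx σr : ℝ) {N : ℕ} (Sa γ : Fin N → ℝ)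
    (x : Fin N → EuclideanSpace ℝ (Fin 2)) (v : Fin N → ℝ) : Fin N → ℝ :=
  fun i => γ i * v i * (Real.log (Sa i / sm) * (1 - ccF sm RM σx σr x v i)
    - Real.log (v i / sm))

noncomputable def clampF (sm : ℝ) {N : ℕ} (Sa : Fin N → ℝ) (v : Fin N → ℝ) : Fin N → ℝ :=
  fun i => max sm (min (v i) (Sa i))

noncomputable def fldc (sm RM σx σr : ℝ) {N : ℕ} (Sa γ : Fin N → ℝ)
    (x : Fin N → EuclideanSpace ℝ (Fin 2)) (v : Fin N → ℝ) : Fin N → ℝ :=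
  fld sm RM σx σr Sa γ x (clampF sm Sa v)

def box (sm : ℝ) {N : ℕ} (Sa : Fin N → ℝ) : Set (Fin N → ℝ) :=
  Set.pi univ fun i => Icc sm (Sa i)

def posOrth (N : ℕ) : Set (Fin N → ℝ) := Set.pi univ fun _ => Ioi (0:ℝ)

lemma mem_box_iff {sm : ℝ} {N : ℕ} {Sa : Fin N → ℝ} {v : Fin N → ℝ} :
    v ∈ box sm Sa ↔ ∀ i, sm ≤ v i ∧ v i ≤ Sa i := by
  simp [box, Set.mem_pi, Icc, and_comm]

lemma pot_nonneg {sm RM : ℝ} (hsm : 0 < sm) (hRM : 0 < RM) {σx σr : ℝ} {b : ℝ}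
    (hb : sm ≤ b) (a d : ℝ) : 0 ≤ pot sm RM σx σr a b d := by
  unfold pot
  apply mul_nonneg
  · apply div_nonneg
    · exact Real.log_nonneg ((one_le_div hsm).2 hb)
    · positivity
  · nlinarith [neg_one_lt_tanh' (Real.log (b / a) / σr)]

lemma pot_le_one {sm RM : ℝ} (hsm : 0 < sm) (hRM : 0 < RM) {σx σr : ℝ} {b : ℝ}
    (hb1 : sm ≤ b) (hb2 : b ≤ sm * Real.exp RM) (a d : ℝ) :
    pot sm RM σx σr a b d ≤ 1 := by
  unfold pot
  set q := d ^ 2 / σx ^ 2 with hqdef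
  have hq : 0 ≤ q := by positivity
  have hb0 : 0 < b := lt_of_lt_of_le hsm hb1
  have hA0 : 0 ≤ Real.log (b / sm) := Real.log_nonneg ((one_le_div hsm).2 hb1)
  have hA : Real.log (b / sm) ≤ RM := by
    rw [Real.log_le_iff_le_exp (by positivity)]
    rw [div_le_iff₀ hsm]
    linarith [hb2, mul_comm sm (Real.exp RM)]
  have hD : 0 < 2 * RM * (1 + q) := by positivity
  have h1 : Real.log (b / sm) / (2 * RM * (1 + q)) ≤ 1 / 2 := by
    rw [div_le_div_iff₀ hD (by norm_num)]
    nlinarith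
  have h2 : 1 + Real.tanh (Real.log (b / a) / σr) ≤ 2 := by
    nlinarith [tanh_lt_one' (Real.log (b / a) / σr)]
  have h0 : 0 ≤ 1 + Real.tanh (Real.log (b / a) / σr) := by
    nlinarith [neg_one_lt_tanh' (Real.log (b / a) / σr)]
  have h3 : 0 ≤ Real.log (b / sm) / (2 * RM * (1 + q)) := by positivity
  nlinarith

lemma ccF_mem {sm RM σx σr : ℝ} (hsm : 0 < sm) (hRM : 0 < RM) {N : ℕ} (hN : 1 < N)
    {Sa : Fin N → ℝ} (hS : ∀ i, Sa i ≤ sm * Real.exp RM)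
    {x : Fin N → EuclideanSpace ℝ (Fin 2)} {v : Fin N → ℝ} (hv : v ∈ box sm Sa) (i : Fin N) :
    ccF sm RM σx σr x v i ∈ Icc (0:ℝ) 1 := by
  have hN1 : (0:ℝ) < (N:ℝ) - 1 := by
    have : (1:ℝ) < (N:ℝ) := by exact_mod_cast hN
    linarith
  have hcard : ((Finset.univ.erase i).card : ℝ) = (N:ℝ) - 1 := by
    rw [Finset.card_erase_of_mem (Finset.mem_univ i)]
    rw [Finset.card_univ, Fintype.card_fin]
    rw [Nat.cast_sub (by omega)]
    norm_num
  constructor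
  · apply mul_nonneg (by positivity)
    apply Finset.sum_nonneg
    intro j _
    exact pot_nonneg hsm hRM ((mem_box_iff.1 hv) j).1 _ _
  · have hsum : ∑ j ∈ Finset.univ.erase i, pot sm RM σx σr (v i) (v j) (dist (x i) (x j))
        ≤ (N:ℝ) - 1 := by
      calc ∑ j ∈ Finset.univ.erase i, pot sm RM σx σr (v i) (v j) (dist (x i) (x j))
          ≤ ∑ _j ∈ Finset.univ.erase i, (1:ℝ) := by
            apply Finset.sum_le_sum
            intro j _
            exact pot_le_one hsm hRM ((mem_box_iff.1 hv) j).1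
              (le_trans ((mem_box_iff.1 hv) j).2 (hS j)) _ _
        _ = (N:ℝ) - 1 := by rw [Finset.sum_const, nsmul_eq_mul, mul_one, hcard]
    unfold ccF
    rw [one_div, ← div_eq_inv_mul, div_le_one hN1]
    exact hsum

lemma clampF_mem_box {sm : ℝ} {N : ℕ} {Sa : Fin N → ℝ} (hS : ∀ i, sm ≤ Sa i) (v : Fin N → ℝ) :
    clampF sm Sa v ∈ box sm Sa := by
  rw [mem_box_iff]
  intro i
  unfold clampF
  constructor
  · exact le_max_left _ _
  · exact max_le (hS i) (min_le_right _ _)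

lemma clampF_eq_self {sm : ℝ} {N : ℕ} {Sa : Fin N → ℝ} {v : Fin N → ℝ} (hv : v ∈ box sm Sa) :
    clampF sm Sa v = v := by
  funext i
  obtain ⟨h1, h2⟩ := mem_box_iff.1 hv i
  unfold clampF
  rw [min_eq_left h2, max_eq_right h1]

lemma clamp1_lip (lo hi a b : ℝ) : |max lo (min a hi) - max lo (min b hi)| ≤ |a - b| := by
  rw [max_comm lo (min a hi), max_comm lo (min b hi)]
  refine le_trans (abs_max_sub_max_le_abs (min a hi) (min b hi) lo) ?_
  refine le_trans (abs_min_sub_min_le_max a hi b hi) ?_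
  simp

lemma lipschitz_clampF (sm : ℝ) {N : ℕ} (Sa : Fin N → ℝ) :
    LipschitzWith 1 (clampF sm Sa) := by
  apply LipschitzWith.of_dist_le_mul
  intro v w
  rw [NNReal.coe_one, one_mul]
  rw [dist_pi_le_iff dist_nonneg]
  intro i
  calc dist (clampF sm Sa v i) (clampF sm Sa w i)
      ≤ dist (v i) (w i) := by
        rw [Real.dist_eq, Real.dist_eq]
        exact clamp1_lip sm (Sa i) (v i) (w i)
    _ ≤ dist v w := dist_le_pi_dist v w i

lemma isOpen_posOrth (N : ℕ) : IsOpen (posOrth N) :=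
  isOpen_set_pi finite_univ fun _ _ => isOpen_Ioi

lemma mem_posOrth {N : ℕ} {v : Fin N → ℝ} : v ∈ posOrth N ↔ ∀ i, 0 < v i := by
  simp [posOrth, Set.mem_pi]

lemma contDiffOn_fld {sm RM σx σr : ℝ} (hsm : 0 < sm) {N : ℕ} (Sa γ : Fin N → ℝ)
    (x : Fin N → EuclideanSpace ℝ (Fin 2)) :
    ContDiffOn ℝ 1 (fld sm RM σx σr Sa γ x) (posOrth N) := by
  rw [contDiffOn_pi]
  intro i
  have hev : ∀ j : Fin N, ContDiff ℝ 1 (fun v : Fin N → ℝ => v j) := fun j =>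
    (ContinuousLinearMap.proj j : (Fin N → ℝ) →L[ℝ] ℝ).contDiff
  have hlog : ∀ j : Fin N, ContDiffOn ℝ 1 (fun v : Fin N → ℝ => Real.log (v j / sm))
      (posOrth N) := by
    intro j
    apply ContDiffOn.log
    · exact ((hev j).contDiffOn).div_const sm
    · intro v hv
      have := mem_posOrth.1 hv j
      positivity
  have hpot : ∀ j : Fin N, ContDiffOn ℝ 1
      (fun v : Fin N → ℝ => pot sm RM σx σr (v i) (v j) (dist (x i) (x j))) (posOrth N) := by
    intro j
    unfold pot
    have h1 : ContDiffOn ℝ 1 (fun v : Fin N → ℝ => Real.log (v j / v i)) (posOrth N) := by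
      apply ContDiffOn.log
      · exact ((hev j).contDiffOn).div ((hev i).contDiffOn)
          (fun v hv => (mem_posOrth.1 hv i).ne')
      · intro v hv
        have h1 := mem_posOrth.1 hv i
        have h2 := mem_posOrth.1 hv j
        positivity
    have h2 : ContDiffOn ℝ 1
        (fun v : Fin N → ℝ => Real.tanh (Real.log (v j / v i) / σr)) (posOrth N) :=
      contDiff_tanh'.comp_contDiffOn (h1.div_const σr)
    exact ((hlog j).div_const _).mul (contDiffOn_const.add h2)
  have hcc : ContDiffOn ℝ 1 (fun v : Fin N → ℝ => ccF sm RM σx σr x v i) (posOrth N) := by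
    unfold ccF
    exact contDiffOn_const.mul (ContDiffOn.sum fun j _ => hpot j)
  have : ContDiffOn ℝ 1 (fun v : Fin N → ℝ =>
      γ i * v i * (Real.log (Sa i / sm) * (1 - ccF sm RM σx σr x v i)
        - Real.log (v i / sm))) (posOrth N) :=
    ((contDiff_const.mul (hev i)).contDiffOn).mul
      ((contDiffOn_const.mul (contDiffOn_const.sub hcc)).sub (hlog i))
  exact this

lemma box_subset_posOrth {sm : ℝ} (hsm : 0 < sm) {N : ℕ} (Sa : Fin N → ℝ) :
    box sm Sa ⊆ posOrth N := fun v hv =>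
  mem_posOrth.2 fun i => lt_of_lt_of_le hsm ((mem_box_iff.1 hv) i).1

lemma isCompact_box (sm : ℝ) {N : ℕ} (Sa : Fin N → ℝ) : IsCompact (box sm Sa) :=
  isCompact_univ_pi fun _ => isCompact_Icc

lemma convex_box (sm : ℝ) {N : ℕ} (Sa : Fin N → ℝ) : Convex ℝ (box sm Sa) :=
  convex_pi fun _ _ => convex_Icc _ _

lemma isClosed_box (sm : ℝ) {N : ℕ} (Sa : Fin N → ℝ) : IsClosed (box sm Sa) :=
  isClosed_set_pi fun _ _ => isClosed_Icc

lemma exists_lipschitz_fldc {sm RM σx σr : ℝ} (hsm : 0 < sm) {N : ℕ} {Sa : Fin N → ℝ}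
    (hS : ∀ i, sm ≤ Sa i) (γ : Fin N → ℝ) (x : Fin N → EuclideanSpace ℝ (Fin 2)) :
    ∃ K : NNReal, LipschitzWith K (fldc sm RM σx σr Sa γ x) := by
  have hcd := contDiffOn_fld (sm := sm) (RM := RM) (σx := σx) (σr := σr) hsm Sa γ x
  have hopen := isOpen_posOrth N
  have hsub := box_subset_posOrth hsm Sa
  have hdiff : ∀ v ∈ box sm Sa, DifferentiableAt ℝ (fld sm RM σx σr Sa γ x) v := by
    intro v hv
    exact ((hcd.differentiableOn one_ne_zero) v (hsub hv)).differentiableAt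
      (hopen.mem_nhds (hsub hv))
  have hcont : ContinuousOn (fun v => ‖fderiv ℝ (fld sm RM σx σr Sa γ x) v‖) (box sm Sa) := by
    apply ContinuousOn.norm
    exact ((hcd.continuousOn_fderiv_of_isOpen hopen le_rfl).mono hsub)
  obtain ⟨M, hM⟩ := (isCompact_box sm Sa).exists_bound_of_continuousOn hcont
  set K : NNReal := ⟨max M 0, le_max_right _ _⟩ with hK
  have hlipOn : LipschitzOnWith K (fld sm RM σx σr Sa γ x) (box sm Sa) := by
    apply Convex.lipschitzOnWith_of_nnnorm_fderiv_le hdiff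
    · intro v hv
      have h0 : ‖fderiv ℝ (fld sm RM σx σr Sa γ x) v‖ ≤ M := by simpa using hM v hv
      have h1 : ‖fderiv ℝ (fld sm RM σx σr Sa γ x) v‖ ≤ max M 0 :=
        le_trans h0 (le_max_left _ _)
      exact_mod_cast h1
    · exact convex_box sm Sa
  refine ⟨K * 1, ?_⟩
  have := hlipOn.comp ((lipschitz_clampF sm Sa).lipschitzOnWith (s := univ))
    (fun v _ => clampF_mem_box hS v)
  rw [← lipschitzOnWith_univ]
  exact this

lemma exists_bound_fldc {sm RM σx σr : ℝ} (hsm : 0 < sm) {N : ℕ} {Sa : Fin N → ℝ}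
    (hS : ∀ i, sm ≤ Sa i) (γ : Fin N → ℝ) (x : Fin N → EuclideanSpace ℝ (Fin 2)) :
    ∃ Cb : ℝ, 0 ≤ Cb ∧ ∀ v, ‖fldc sm RM σx σr Sa γ x v‖ ≤ Cb := by
  have hcd := contDiffOn_fld (sm := sm) (RM := RM) (σx := σx) (σr := σr) hsm Sa γ x
  have hsub := box_subset_posOrth hsm Sa
  obtain ⟨M, hM⟩ := (isCompact_box sm Sa).exists_bound_of_continuousOn
    ((hcd.continuousOn).mono hsub)
  refine ⟨max M 0, le_max_right _ _, fun v => ?_⟩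
  exact le_trans (hM _ (clampF_mem_box hS v)) (le_max_left _ _)

section Global

variable {E : Type*} [NormedAddCommGroup E] [NormedSpace ℝ E] [CompleteSpace E]

lemma exists_global_sol (G : E → E) (K : NNReal) (hK : LipschitzWith K G)
    (Cb : ℝ) (hCb0 : 0 ≤ Cb) (hCb : ∀ v, ‖G v‖ ≤ Cb) (x₀ : E) :
    ∃ f : ℝ → E, f 0 = x₀ ∧ ∀ t ∈ Ici (0:ℝ), HasDerivWithinAt f (G (f t)) (Ici 0) t := by
  -- solutions on [0, n+1]
  have hsol : ∀ n : ℕ, ∃ f : ℝ → E, f 0 = x₀ ∧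
      ∀ t ∈ Icc (0:ℝ) (n+1), HasDerivWithinAt f (G (f t)) (Icc (0:ℝ) (n+1)) t := by
    intro n
    have hpl : IsPicardLindelof (fun _ : ℝ => G) (tmin := 0) (tmax := (n:ℝ)+1)
        ⟨0, ⟨le_refl 0, by positivity⟩⟩ x₀ ⟨Cb * ((n:ℝ)+1), by positivity⟩ 0 ⟨Cb, hCb0⟩ K := by
      apply IsPicardLindelof.of_time_independent
      · exact fun x _ => hCb x
      · exact hK.lipschitzOnWith
      · have : max ((n:ℝ)+1-0) (0-0) = (n:ℝ)+1 := by
          rw [sub_zero, sub_zero, max_eq_left (by positivity)]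
        simp only [NNReal.coe_mk, NNReal.coe_zero, sub_zero] at this ⊢
        rw [this]
        exact le_rfl
    obtain ⟨f, hf0, hf⟩ := hpl.exists_eq_forall_mem_Icc_hasDerivWithinAt₀
    exact ⟨f, hf0, hf⟩
  choose F hF0 hFd using hsol
  -- uniqueness on common intervals
  have huniq : ∀ m n : ℕ, m ≤ n → EqOn (F m) (F n) (Icc (0:ℝ) (m+1)) := by
    intro m n hmn
    have hcont : ∀ k : ℕ, ∀ b : ℝ, b ≤ (k:ℝ)+1 → ContinuousOn (F k) (Icc 0 b) := by
      intro k b hb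
      apply ContinuousOn.mono (s := Icc (0:ℝ) ((k:ℝ)+1))
      · exact fun t ht => (hFd k t ht).continuousWithinAt
      · exact Icc_subset_Icc le_rfl hb
    apply ODE_solution_unique_of_mem_Icc_right
      (v := fun _ : ℝ => G) (s := fun _ => (univ : Set E)) (K := K)
      (fun t _ => hK.lipschitzOnWith)
    · exact hcont m _ le_rfl
    · intro t ht
      exact (hFd m t (Ico_subset_Icc_self ht)).mono_of_mem_nhdsWithin
        (Icc_mem_nhdsGE_of_mem ht)
    · exact fun t _ => mem_univ _
    · refine hcont n _ ?_
      have : (m:ℝ) ≤ (n:ℝ) := by exact_mod_cast hmn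
      linarith
    · intro t ht
      have ht' : t ∈ Ico (0:ℝ) ((n:ℝ)+1) := by
        refine ⟨ht.1, lt_of_lt_of_le ht.2 ?_⟩
        have : (m:ℝ) ≤ (n:ℝ) := by exact_mod_cast hmn
        linarith
      exact (hFd n t (Ico_subset_Icc_self ht')).mono_of_mem_nhdsWithin
        (Icc_mem_nhdsGE_of_mem ht')
    · exact fun t _ => mem_univ _
    · rw [hF0 m, hF0 n]
  have hagree : ∀ m n : ℕ, ∀ t : ℝ, t ∈ Icc (0:ℝ) ((m:ℝ)+1) → t ∈ Icc (0:ℝ) ((n:ℝ)+1) →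
      F m t = F n t := by
    intro m n t htm htn
    rcases le_total m n with h | h
    · exact huniq m n h htm
    · exact (huniq n m h htn).symm
  refine ⟨fun t => F ⌈t⌉₊ t, by simpa using hF0 0, ?_⟩
  intro t ht
  set n := ⌈t⌉₊ with hn
  have htn : t ≤ (n:ℝ) := Nat.le_ceil t
  have htmem : t ∈ Icc (0:ℝ) ((n:ℝ)+1) := ⟨ht, by linarith⟩
  have heq : ∀ τ ∈ Icc (0:ℝ) ((n:ℝ)+1), F ⌈τ⌉₊ τ = F n τ := by
    intro τ hτ
    exact hagree _ _ τ ⟨hτ.1, by linarith [Nat.le_ceil τ]⟩ hτ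
  have hd : HasDerivWithinAt (fun τ => F ⌈τ⌉₊ τ) (G (F ⌈t⌉₊ t)) (Icc (0:ℝ) ((n:ℝ)+1)) t := by
    have := hFd n t htmem
    rw [← heq t htmem] at this ⊢
    exact this.congr heq (heq t htmem)
  have hmem : Icc (0:ℝ) ((n:ℝ)+1) ∈ nhdsWithin t (Ici (0:ℝ)) := by
    have : Icc (0:ℝ) ((n:ℝ)+1) = Ici 0 ∩ Iic ((n:ℝ)+1) := by
      ext y; simp [Icc, Ici, Iic, and_comm]
    rw [this]
    exact Filter.inter_mem self_mem_nhdsWithin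
      (mem_nhdsWithin_of_mem_nhds (Iic_mem_nhds (by linarith)))
  exact hd.mono_of_mem_nhdsWithin hmem

end Global

lemma hasDerivAt_posPartSq' (S x : ℝ) :
    HasDerivAt (fun y => (max (S - y) 0) ^ 2) (-(2 * max (S - x) 0)) x := by
  have h1 : HasDerivAt (fun y : ℝ => -y) (-1) x := (hasDerivAt_id x).neg
  have h2 := (hasDerivAt_posPartSq (-S) (-x)).comp x h1
  have h3 : ((fun z => (max (z - -S) 0) ^ 2) ∘ fun y : ℝ => -y)
      = fun y => (max (S - y) 0) ^ 2 := by
    funext y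
    simp only [Function.comp]
    congr 2
    ring
  rw [h3] at h2
  have h4 : -x - -S = S - x := by ring
  rw [h4] at h2
  rw [show 2 * max (S - x) 0 * -1 = -(2 * max (S - x) 0) by ring] at h2
  exact h2

lemma monoIci {f g : ℝ → ℝ} (hf : ∀ t ∈ Ici (0:ℝ), HasDerivWithinAt f (g t) (Ici 0) t)
    (hg : ∀ t ∈ Ioi (0:ℝ), 0 ≤ g t) : MonotoneOn f (Ici 0) := by
  apply monotoneOn_of_deriv_nonneg (convex_Ici 0)
  · exact fun t ht => (hf t ht).continuousWithinAt
  · intro t ht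
    rw [interior_Ici] at ht
    exact ((hf t (mem_Ici.2 (le_of_lt ht))).hasDerivAt (Ici_mem_nhds ht)).differentiableAt.differentiableWithinAt
  · intro t ht
    rw [interior_Ici] at ht
    rw [((hf t (mem_Ici.2 (le_of_lt ht))).hasDerivAt (Ici_mem_nhds ht)).deriv]
    exact hg t ht

lemma antiIci {f g : ℝ → ℝ} (hf : ∀ t ∈ Ici (0:ℝ), HasDerivWithinAt f (g t) (Ici 0) t)
    (hg : ∀ t ∈ Ioi (0:ℝ), g t ≤ 0) : AntitoneOn f (Ici 0) := by
  apply antitoneOn_of_deriv_nonpos (convex_Ici 0)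
  · exact fun t ht => (hf t ht).continuousWithinAt
  · intro t ht
    rw [interior_Ici] at ht
    exact ((hf t (mem_Ici.2 (le_of_lt ht))).hasDerivAt (Ici_mem_nhds ht)).differentiableAt.differentiableWithinAt
  · intro t ht
    rw [interior_Ici] at ht
    rw [((hf t (mem_Ici.2 (le_of_lt ht))).hasDerivAt (Ici_mem_nhds ht)).deriv]
    exact hg t ht

section Invariance

variable {sm RM σx σr : ℝ} {N : ℕ} {Sa γ : Fin N → ℝ} {x : Fin N → EuclideanSpace ℝ (Fin 2)}
  {s0 : Fin N → ℝ} {sol : ℝ → Fin N → ℝ}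

lemma fldc_le_zero_of_ge (hsm : 0 < sm) (hRM : 0 < RM) (hN : 1 < N)
    (hS : ∀ i, sm < Sa i ∧ Sa i < sm * Real.exp RM) (hγ : ∀ i, 0 < γ i)
    (v : Fin N → ℝ) (i : Fin N) (h : Sa i ≤ v i) :
    fldc sm RM σx σr Sa γ x v i ≤ 0 := by
  have hSle : ∀ j, sm ≤ Sa j := fun j => (hS j).1.le
  set w := clampF sm Sa v with hw
  have hwbox : w ∈ box sm Sa := clampF_mem_box hSle v
  have hwi : w i = Sa i := by
    rw [hw]
    unfold clampF
    rw [min_eq_right h, max_eq_right (hSle i)]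
  have hc := ccF_mem (σx := σx) (σr := σr) (x := x) hsm hRM hN (fun j => (hS j).2.le) hwbox i
  have hL : 0 ≤ Real.log (Sa i / sm) := Real.log_nonneg ((one_le_div hsm).2 (hSle i))
  show fld sm RM σx σr Sa γ x w i ≤ 0
  unfold fld
  rw [hwi]
  obtain ⟨hc0, hc1⟩ := hc
  nlinarith [(hγ i), lt_of_lt_of_le hsm (hSle i),
    mul_nonneg (mul_nonneg (hγ i).le (lt_of_lt_of_le hsm (hSle i)).le)
      (mul_nonneg hL hc0)]

lemma fldc_nonneg_of_le (hsm : 0 < sm) (hRM : 0 < RM) (hN : 1 < N)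
    (hS : ∀ i, sm < Sa i ∧ Sa i < sm * Real.exp RM) (hγ : ∀ i, 0 < γ i)
    (v : Fin N → ℝ) (i : Fin N) (h : v i ≤ sm) :
    0 ≤ fldc sm RM σx σr Sa γ x v i := by
  have hSle : ∀ j, sm ≤ Sa j := fun j => (hS j).1.le
  set w := clampF sm Sa v with hw
  have hwbox : w ∈ box sm Sa := clampF_mem_box hSle v
  have hwi : w i = sm := by
    rw [hw]
    unfold clampF
    rw [min_eq_left (le_trans h (hSle i)), max_eq_left h]
  have hc := ccF_mem (σx := σx) (σr := σr) (x := x) hsm hRM hN (fun j => (hS j).2.le) hwbox i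
  have hL : 0 ≤ Real.log (Sa i / sm) := Real.log_nonneg ((one_le_div hsm).2 (hSle i))
  show 0 ≤ fld sm RM σx σr Sa γ x w i
  unfold fld
  rw [hwi, div_self hsm.ne', Real.log_one, sub_zero]
  obtain ⟨hc0, hc1⟩ := hc
  exact mul_nonneg (mul_nonneg (hγ i).le hsm.le) (mul_nonneg hL (by linarith))

lemma sol_mem_box (hsm : 0 < sm) (hRM : 0 < RM) (hN : 1 < N)
    (hS : ∀ i, sm < Sa i ∧ Sa i < sm * Real.exp RM) (hγ : ∀ i, 0 < γ i)
    (hinit : ∀ i, sm < s0 i ∧ s0 i < Sa i)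
    (hsol0 : sol 0 = s0)
    (hsold : ∀ t ∈ Ici (0:ℝ),
      HasDerivWithinAt sol (fldc sm RM σx σr Sa γ x (sol t)) (Ici 0) t) :
    ∀ t ∈ Ici (0:ℝ), sol t ∈ box sm Sa := by
  intro t ht
  rw [mem_box_iff]
  intro i
  have hci : ∀ τ ∈ Ici (0:ℝ), HasDerivWithinAt (fun σ => sol σ i)
      (fldc sm RM σx σr Sa γ x (sol τ) i) (Ici 0) τ := fun τ hτ =>
    (hasDerivWithinAt_pi.1 (hsold τ hτ)) i
  constructor
  · -- lower bound
    have hder : ∀ τ ∈ Ici (0:ℝ), HasDerivWithinAt (fun σ => (max (sm - sol σ i) 0) ^ 2)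
        (-(2 * max (sm - sol τ i) 0) * fldc sm RM σx σr Sa γ x (sol τ) i) (Ici 0) τ :=
      fun τ hτ => by have h := (hasDerivAt_posPartSq' sm (sol τ i)).comp_hasDerivWithinAt τ (hci τ hτ); exact h
    have hanti : AntitoneOn (fun σ => (max (sm - sol σ i) 0) ^ 2) (Ici 0) := by
      apply antiIci hder
      intro τ hτ
      rcases le_or_gt sm (sol τ i) with h | h
      · rw [max_eq_right (by linarith)]
        simp
      · have hf := fldc_nonneg_of_le (σx := σx) (σr := σr) (x := x) hsm hRM hN hS hγ (sol τ) i h.le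
        have hm : 0 ≤ max (sm - sol τ i) 0 := le_max_right _ _
        nlinarith
    have h0 : (fun σ => (max (sm - sol σ i) 0) ^ 2) 0 = 0 := by
      simp only [hsol0]
      rw [max_eq_right (by linarith [(hinit i).1])]
      norm_num
    have hle := hanti (self_mem_Ici) ht ht
    rw [h0] at hle
    have hge : 0 ≤ (max (sm - sol t i) 0) ^ 2 := sq_nonneg _
    have : (max (sm - sol t i) 0) ^ 2 = 0 := le_antisymm hle hge
    have := pow_eq_zero_iff (two_ne_zero) |>.1 this
    have := max_eq_right_iff.1 this
    linarith
  · -- upper bound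
    have hder : ∀ τ ∈ Ici (0:ℝ), HasDerivWithinAt (fun σ => (max (sol σ i - Sa i) 0) ^ 2)
        (2 * max (sol τ i - Sa i) 0 * fldc sm RM σx σr Sa γ x (sol τ) i) (Ici 0) τ :=
      fun τ hτ => by have h := (hasDerivAt_posPartSq (Sa i) (sol τ i)).comp_hasDerivWithinAt τ (hci τ hτ); exact h
    have hanti : AntitoneOn (fun σ => (max (sol σ i - Sa i) 0) ^ 2) (Ici 0) := by
      apply antiIci hder
      intro τ hτ
      rcases le_or_gt (sol τ i) (Sa i) with h | h
      · rw [max_eq_right (by linarith)]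
        simp
      · have hf := fldc_le_zero_of_ge (σx := σx) (σr := σr) (x := x) hsm hRM hN hS hγ (sol τ) i h.le
        have hm : 0 ≤ max (sol τ i - Sa i) 0 := le_max_right _ _
        nlinarith
    have h0 : (fun σ => (max (sol σ i - Sa i) 0) ^ 2) 0 = 0 := by
      simp only [hsol0]
      rw [max_eq_right (by linarith [(hinit i).2])]
      norm_num
    have hle := hanti (self_mem_Ici) ht ht
    rw [h0] at hle
    have hge : 0 ≤ (max (sol t i - Sa i) 0) ^ 2 := sq_nonneg _
    have : (max (sol t i - Sa i) 0) ^ 2 = 0 := le_antisymm hle hge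
    have := pow_eq_zero_iff (two_ne_zero) |>.1 this
    have := max_eq_right_iff.1 this
    linarith

end Invariance

section Strict

variable {sm RM σx σr : ℝ} {N : ℕ} {Sa γ : Fin N → ℝ} {x : Fin N → EuclideanSpace ℝ (Fin 2)}
  {s0 : Fin N → ℝ} {sol : ℝ → Fin N → ℝ}

lemma sol_mem_openBox (hsm : 0 < sm) (hRM : 0 < RM) (hN : 1 < N)
    (hS : ∀ i, sm < Sa i ∧ Sa i < sm * Real.exp RM) (hγ : ∀ i, 0 < γ i)
    (hinit : ∀ i, sm < s0 i ∧ s0 i < Sa i)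
    (hsol0 : sol 0 = s0)
    (hsold : ∀ t ∈ Ici (0:ℝ),
      HasDerivWithinAt sol (fldc sm RM σx σr Sa γ x (sol t)) (Ici 0) t) :
    ∀ t ∈ Ici (0:ℝ), ∀ i, sm < sol t i ∧ sol t i < Sa i := by
  have hbox := sol_mem_box hsm hRM hN hS hγ hinit hsol0 hsold
  intro t ht i
  -- setup
  have hgmem : ∀ τ ∈ Ici (0:ℝ), sm ≤ sol τ i ∧ sol τ i ≤ Sa i := fun τ hτ =>
    (mem_box_iff.1 (hbox τ hτ)) i
  have hgpos : ∀ τ ∈ Ici (0:ℝ), 0 < sol τ i := fun τ hτ =>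
    lt_of_lt_of_le hsm (hgmem τ hτ).1
  set L := Real.log (Sa i / sm) with hLdef
  have hL : 0 < L := Real.log_pos ((one_lt_div hsm).2 (hS i).1)
  set c : ℝ → ℝ := fun τ => ccF sm RM σx σr x (sol τ) i with hcdef
  have hcmem : ∀ τ ∈ Ici (0:ℝ), 0 ≤ c τ ∧ c τ ≤ 1 := fun τ hτ =>
    ccF_mem (σx := σx) (σr := σr) (x := x) hsm hRM hN (fun j => (hS j).2.le) (hbox τ hτ) i
  -- coordinate derivative with the (unclamped) field
  have hfd : ∀ τ ∈ Ici (0:ℝ), HasDerivWithinAt (fun σ => sol σ i)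
      (γ i * sol τ i * (L * (1 - c τ) - Real.log (sol τ i / sm))) (Ici 0) τ := by
    intro τ hτ
    have h1 := (hasDerivWithinAt_pi.1 (hsold τ hτ)) i
    have h2 : fldc sm RM σx σr Sa γ x (sol τ) = fld sm RM σx σr Sa γ x (sol τ) := by
      unfold fldc
      rw [clampF_eq_self (hbox τ hτ)]
    rw [h2] at h1
    exact h1
  set u : ℝ → ℝ := fun τ => Real.log (sol τ i / sm) with hudef
  have hud : ∀ τ ∈ Ici (0:ℝ), HasDerivWithinAt u
      ((sol τ i / sm)⁻¹ * ((γ i * sol τ i * (L * (1 - c τ) - u τ)) / sm)) (Ici 0) τ := by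
    intro τ hτ
    exact (Real.hasDerivAt_log (div_pos (hgpos τ hτ) hsm).ne').comp_hasDerivWithinAt τ
      ((hfd τ hτ).div_const sm)
  have hexp : ∀ τ : ℝ, HasDerivAt (fun σ => Real.exp (γ i * σ)) (Real.exp (γ i * τ) * γ i) τ := by
    intro τ
    have h1 : HasDerivAt (fun σ : ℝ => γ i * σ) (γ i) τ := by
      simpa using (hasDerivAt_id τ).const_mul (γ i)
    exact (Real.hasDerivAt_exp (γ i * τ)).comp τ h1
  have hu0 : u 0 = Real.log (s0 i / sm) := by rw [hudef]; simp [hsol0]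
  constructor
  · -- lower strict bound
    have hψd : ∀ τ ∈ Ici (0:ℝ), HasDerivWithinAt (fun σ => Real.exp (γ i * σ) * u σ)
        (Real.exp (γ i * τ) * γ i * u τ +
          Real.exp (γ i * τ) * ((sol τ i / sm)⁻¹ * ((γ i * sol τ i * (L * (1 - c τ) - u τ)) / sm)))
        (Ici 0) τ :=
      fun τ hτ => ((hexp τ).hasDerivWithinAt).mul (hud τ hτ)
    have hmono : MonotoneOn (fun σ => Real.exp (γ i * σ) * u σ) (Ici 0) := by
      apply monoIci hψd
      intro τ hτ
      have hτ' : τ ∈ Ici (0:ℝ) := mem_Ici.2 (le_of_lt hτ)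
      have hg0 : sol τ i ≠ 0 := (hgpos τ hτ').ne'
      have key : Real.exp (γ i * τ) * γ i * u τ +
          Real.exp (γ i * τ) * ((sol τ i / sm)⁻¹ * ((γ i * sol τ i * (L * (1 - c τ) - u τ)) / sm))
          = Real.exp (γ i * τ) * (γ i * (L * (1 - c τ))) := by
        field_simp
        ring
      rw [key]
      have h1 := (hcmem τ hτ').2
      exact mul_nonneg (Real.exp_pos _).le
        (mul_nonneg (hγ i).le (mul_nonneg hL.le (by linarith)))
    have hpos0 : 0 < Real.log (s0 i / sm) := Real.log_pos ((one_lt_div hsm).2 (hinit i).1)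
    have hψt : 0 < Real.exp (γ i * t) * u t := by
      have h2 := hmono self_mem_Ici ht ht
      simp only [mul_zero, Real.exp_zero, one_mul, hu0] at h2
      linarith
    have hut : 0 < u t := by
      nlinarith [Real.exp_pos (γ i * t)]
    have := (Real.log_pos_iff (div_pos (hgpos t ht) hsm).le).1 hut
    exact (one_lt_div hsm).1 this
  · -- upper strict bound
    have hχd : ∀ τ ∈ Ici (0:ℝ), HasDerivWithinAt (fun σ => Real.exp (γ i * σ) * (L - u σ))
        (Real.exp (γ i * τ) * γ i * (L - u τ) +
          Real.exp (γ i * τ) *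
            (0 - (sol τ i / sm)⁻¹ * ((γ i * sol τ i * (L * (1 - c τ) - u τ)) / sm)))
        (Ici 0) τ :=
      fun τ hτ => ((hexp τ).hasDerivWithinAt).mul
        ((hasDerivWithinAt_const τ (Ici (0:ℝ)) L).sub (hud τ hτ))
    have hmono : MonotoneOn (fun σ => Real.exp (γ i * σ) * (L - u σ)) (Ici 0) := by
      apply monoIci hχd
      intro τ hτ
      have hτ' : τ ∈ Ici (0:ℝ) := mem_Ici.2 (le_of_lt hτ)
      have hg0 : sol τ i ≠ 0 := (hgpos τ hτ').ne'
      have key : Real.exp (γ i * τ) * γ i * (L - u τ) +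
          Real.exp (γ i * τ) *
            (0 - (sol τ i / sm)⁻¹ * ((γ i * sol τ i * (L * (1 - c τ) - u τ)) / sm))
          = Real.exp (γ i * τ) * (γ i * (L * c τ)) := by
        field_simp
        ring
      rw [key]
      have h1 := (hcmem τ hτ').1
      exact mul_nonneg (Real.exp_pos _).le
        (mul_nonneg (hγ i).le (mul_nonneg hL.le h1))
    have hpos0 : 0 < L - Real.log (s0 i / sm) := by
      have hs0pos : 0 < s0 i / sm := div_pos (lt_trans hsm (hinit i).1) hsm
      have h3 := Real.log_lt_log hs0pos ((div_lt_div_iff_of_pos_right hsm).2 (hinit i).2)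
      rw [hLdef]
      linarith
    have hχt : 0 < Real.exp (γ i * t) * (L - u t) := by
      have h2 := hmono self_mem_Ici ht ht
      simp only [mul_zero, Real.exp_zero, one_mul, hu0] at h2
      linarith
    have hut : u t < L := by
      nlinarith [Real.exp_pos (γ i * t)]
    have := (Real.log_lt_log_iff (div_pos (hgpos t ht) hsm)
      (div_pos (lt_trans hsm (hS i).1) hsm)).1 hut
    exact (div_lt_div_iff_of_pos_right hsm).1 this

end Strict

section Unique

variable {sm RM σx σr : ℝ} {N : ℕ} {Sa γ : Fin N → ℝ} {x : Fin N → EuclideanSpace ℝ (Fin 2)}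
  {s0 : Fin N → ℝ} {sol w : ℝ → Fin N → ℝ}

lemma sol_unique (hsm : 0 < sm) (hRM : 0 < RM) (hN : 1 < N)
    (hS : ∀ i, sm < Sa i ∧ Sa i < sm * Real.exp RM) (hγ : ∀ i, 0 < γ i)
    (hinit : ∀ i, sm < s0 i ∧ s0 i < Sa i)
    (K : NNReal) (hK : LipschitzWith K (fldc sm RM σx σr Sa γ x))
    (hsol0 : sol 0 = s0)
    (hsold : ∀ t ∈ Ici (0:ℝ),
      HasDerivWithinAt sol (fldc sm RM σx σr Sa γ x (sol t)) (Ici 0) t)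
    (hw0 : w 0 = s0)
    (hwd : ∀ t ∈ Ici (0:ℝ),
      HasDerivWithinAt w (fld sm RM σx σr Sa γ x (w t)) (Ici 0) t) :
    ∀ t ∈ Ici (0:ℝ), w t = sol t := by
  have hbox := sol_mem_box hsm hRM hN hS hγ hinit hsol0 hsold
  have hopen := sol_mem_openBox hsm hRM hN hS hγ hinit hsol0 hsold
  have hwcont : ContinuousOn w (Ici 0) := fun τ hτ => (hwd τ hτ).continuousWithinAt
  have hscont : ContinuousOn sol (Ici 0) := fun τ hτ => (hsold τ hτ).continuousWithinAt
  have hs0box : s0 ∈ box sm Sa :=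
    mem_box_iff.2 fun i => ⟨(hinit i).1.le, (hinit i).2.le⟩
  intro b hb
  -- it suffices to show EqOn w sol on Icc 0 b
  set A : Set ℝ := {T | T ∈ Icc (0:ℝ) b ∧ ∀ t ∈ Icc (0:ℝ) T, w t ∈ box sm Sa} with hA
  have hA0 : (0:ℝ) ∈ A := by
    refine ⟨⟨le_refl 0, hb⟩, fun t ht => ?_⟩
    have : t = 0 := le_antisymm ht.2 ht.1
    rw [this, hw0]
    exact hs0box
  have hne : A.Nonempty := ⟨0, hA0⟩
  have hbdd : BddAbove A := ⟨b, fun T hT => hT.1.2⟩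
  set T₁ := sSup A with hT₁
  have hT0 : 0 ≤ T₁ := le_csSup hbdd hA0
  have hTb : T₁ ≤ b := csSup_le hne fun T hT => hT.1.2
  have hWbox : ∀ t ∈ Ico (0:ℝ) T₁, w t ∈ box sm Sa := by
    intro t ht
    obtain ⟨T, hT, hlt⟩ := exists_lt_of_lt_csSup hne ht.2
    exact hT.2 t ⟨ht.1, hlt.le⟩
  have hWT : w T₁ ∈ box sm Sa := by
    rcases eq_or_lt_of_le hT0 with h | h
    · rw [← h, hw0]; exact hs0box
    · have hcl : T₁ ∈ closure (Ico 0 T₁) := by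
        rw [closure_Ico (ne_of_lt h)]
        exact ⟨hT0, le_refl _⟩
      have hnb : (nhdsWithin T₁ (Ico 0 T₁)).NeBot := mem_closure_iff_nhdsWithin_neBot.1 hcl
      have htd : Filter.Tendsto w (nhdsWithin T₁ (Ico 0 T₁)) (nhds (w T₁)) :=
        ((hwd T₁ hT0).continuousWithinAt.mono fun y hy => hy.1)
      exact (isClosed_box sm Sa).mem_of_tendsto htd
        (Filter.eventually_of_mem self_mem_nhdsWithin fun t ht => hWbox t ht)
  have hWbox' : ∀ t ∈ Icc (0:ℝ) T₁, w t ∈ box sm Sa := by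
    intro t ht
    rcases lt_or_eq_of_le ht.2 with h | h
    · exact hWbox t ⟨ht.1, h⟩
    · rw [h]; exact hWT
  have hEq : EqOn w sol (Icc 0 T₁) := by
    apply ODE_solution_unique_of_mem_Icc_right
      (v := fun _ : ℝ => fldc sm RM σx σr Sa γ x) (s := fun _ => (univ : Set (Fin N → ℝ)))
      (K := K) (fun _ _ => hK.lipschitzOnWith)
    · exact hwcont.mono fun y hy => hy.1
    · intro t ht
      have h1 := (hwd t ht.1).mono (Ici_subset_Ici.2 ht.1)
      have h2 : fldc sm RM σx σr Sa γ x (w t) = fld sm RM σx σr Sa γ x (w t) := by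
        unfold fldc
        rw [clampF_eq_self (hWbox t ht)]
      rw [h2]
      exact h1
    · exact fun t _ => mem_univ _
    · exact hscont.mono fun y hy => hy.1
    · exact fun t ht => (hsold t ht.1).mono (Ici_subset_Ici.2 ht.1)
    · exact fun t _ => mem_univ _
    · rw [hw0, hsol0]
  have hTeq : T₁ = b := by
    by_contra hne2
    have hTlt : T₁ < b := lt_of_le_of_ne hTb hne2
    have hwT : w T₁ = sol T₁ := hEq ⟨hT0, le_refl _⟩
    set O : Set (Fin N → ℝ) := Set.pi univ fun i => Ioo sm (Sa i) with hO
    have hOopen : IsOpen O := isOpen_set_pi finite_univ fun _ _ => isOpen_Ioo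
    have hmemO : w T₁ ∈ O := by
      rw [hwT]
      intro i _
      exact ⟨(hopen T₁ hT0 i).1, (hopen T₁ hT0 i).2⟩
    have hOsub : O ⊆ box sm Sa := fun v hv =>
      mem_box_iff.2 fun i => ⟨(hv i (mem_univ i)).1.le, (hv i (mem_univ i)).2.le⟩
    have hpre : w ⁻¹' O ∈ nhdsWithin T₁ (Ici 0) :=
      (hwd T₁ hT0).continuousWithinAt (hOopen.mem_nhds hmemO)
    rw [mem_nhdsWithin] at hpre
    obtain ⟨V, hVopen, hVmem, hVsub⟩ := hpre
    obtain ⟨δ, hδ, hball⟩ := Metric.isOpen_iff.1 hVopen T₁ hVmem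
    set T' := min b (T₁ + δ / 2) with hT'
    have hT'A : T' ∈ A := by
      refine ⟨⟨le_min (le_trans hT0 hTb) (by linarith), min_le_left _ _⟩, fun t ht => ?_⟩
      rcases le_or_gt t T₁ with h | h
      · exact hWbox' t ⟨ht.1, h⟩
      · have htb : t ∈ Metric.ball T₁ δ := by
          rw [Metric.mem_ball, Real.dist_eq, abs_of_pos (by linarith)]
          have : t ≤ T₁ + δ / 2 := le_trans ht.2 (min_le_right _ _)
          linarith
        exact hOsub (hVsub ⟨hball htb, ht.1⟩)
    have : T' ≤ T₁ := le_csSup hbdd hT'A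
    have : T₁ < T' := lt_min hTlt (by linarith)
    linarith
  rw [← hTeq] at hb ⊢
  exact hEq ⟨hT0, le_refl _⟩

end Unique

/-- under the admissibility assumptions on the initial configuration, the
competition system has a unique global solution, and all competition indices stay in `[0,1]`. -/
theorem stmt_1 (sm RM σx σr : ℝ) (hsm : 0 < sm) (hRM : 0 < RM) (hσx : 0 < σx) (hσr : 0 < σr)
    (N : ℕ) (hN : 1 < N) (s0 Sa γ : Fin N → ℝ) (x : Fin N → EuclideanSpace ℝ (Fin 2))
    (hinit : ∀ i, sm < s0 i ∧ s0 i < Sa i)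
    (hS : ∀ i, sm < Sa i ∧ Sa i < sm * Real.exp RM)
    (hγ : ∀ i, 0 < γ i) :
    ∃ s : Fin N → ℝ → ℝ,
      IsCompetitionSol sm RM σx σr s0 x Sa γ s ∧
      (∀ s' : Fin N → ℝ → ℝ, IsCompetitionSol sm RM σx σr s0 x Sa γ s' →
        ∀ i, ∀ t, 0 ≤ t → s' i t = s i t) ∧
      (∀ t, 0 ≤ t → ∀ i,
        0 ≤ cIdx sm RM σx σr x s i t ∧ cIdx sm RM σx σr x s i t ≤ 1) := by
  have hSle : ∀ i, sm ≤ Sa i := fun i => (hS i).1.le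
  obtain ⟨K, hK⟩ := exists_lipschitz_fldc (RM := RM) (σx := σx) (σr := σr) hsm hSle γ x
  obtain ⟨Cb, hCb0, hCb⟩ := exists_bound_fldc (RM := RM) (σx := σx) (σr := σr) hsm hSle γ x
  obtain ⟨sol, hsol0, hsold⟩ :=
    exists_global_sol (fldc sm RM σx σr Sa γ x) K hK Cb hCb0 hCb s0
  have hbox := sol_mem_box hsm hRM hN hS hγ hinit hsol0 hsold
  refine ⟨fun i t => sol t i, ?_, ?_, ?_⟩
  · -- it is a solution
    intro i
    constructor
    · show sol 0 i = s0 i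
      rw [hsol0]
    · intro t ht
      have h1 := (hasDerivWithinAt_pi.1 (hsold t ht)) i
      have h2 : fldc sm RM σx σr Sa γ x (sol t) = fld sm RM σx σr Sa γ x (sol t) := by
        unfold fldc
        rw [clampF_eq_self (hbox t ht)]
      rw [h2] at h1
      exact h1
  · -- uniqueness
    intro s' hs' i t ht
    set w : ℝ → Fin N → ℝ := fun τ j => s' j τ with hwdef
    have hw0 : w 0 = s0 := funext fun j => (hs' j).1
    have hwd : ∀ τ ∈ Ici (0:ℝ),
        HasDerivWithinAt w (fld sm RM σx σr Sa γ x (w τ)) (Ici 0) τ := by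
      intro τ hτ
      exact hasDerivWithinAt_pi.2 fun j => (hs' j).2 τ hτ
    have := sol_unique hsm hRM hN hS hγ hinit K hK hsol0 hsold hw0 hwd t ht
    exact congrFun this i
  · -- index bounds
    intro t ht i
    exact ccF_mem (σx := σx) (σr := σr) (x := x) hsm hRM hN
      (fun j => (hS j).2.le) (hbox t ht) i
end

section
/- Under the hypotheses s_m < s_i^0 < S_i, s_m < S_i < s_m·e^{R_M}, γ_i > 0 for all i, the unique global solution (s_1,…,s_N) of the competition system satisfies, for every i and every t ≥ 0, the sandwich bound s_m·(s_i^0/s_m)^{e^{−γ_i t}} ≤ s_i(t) ≤ S_i·(s_i^0/s_m)^{e^{−γ_i t}}; in particular s_m < s_i(t) < S_i for all t ≥ 0. -/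
open MeasureTheory Set

lemma tanh_abs_le (x : ℝ) : |Real.tanh x| ≤ 1 := by
  rw [Real.tanh_eq_sinh_div_cosh, abs_div, abs_of_pos (Real.cosh_pos x),
    div_le_one (Real.cosh_pos x), abs_le]
  constructor <;> rw [Real.sinh_eq, Real.cosh_eq] <;>
    nlinarith [Real.exp_pos x, Real.exp_pos (-x)]

lemma pot_mem (sm RM σx σr s s' d : ℝ) (hsm : 0 < sm) (hRM : 0 < RM)
    (hσx : 0 < σx) (h1 : sm ≤ s') (h2 : s' ≤ sm * Real.exp RM) :
    pot sm RM σx σr s s' d ∈ Set.Icc (0:ℝ) 1 := by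
  obtain ⟨ht1, ht2⟩ := abs_le.1 (tanh_abs_le (Real.log (s' / s) / σr))
  have hd2 : (0:ℝ) ≤ d ^ 2 / σx ^ 2 := by positivity
  have hden : 2 * RM ≤ 2 * RM * (1 + d ^ 2 / σx ^ 2) := by nlinarith
  have hdenpos : (0:ℝ) < 2 * RM * (1 + d ^ 2 / σx ^ 2) := by nlinarith
  have hs'pos : 0 < s' := lt_of_lt_of_le hsm h1
  have hlog0 : 0 ≤ Real.log (s' / sm) :=
    Real.log_nonneg ((one_le_div hsm).2 h1)
  have hlogRM : Real.log (s' / sm) ≤ RM := by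
    rw [Real.log_le_iff_le_exp (by positivity), div_le_iff₀ hsm, mul_comm]
    exact h2
  have hA0 : 0 ≤ Real.log (s' / sm) / (2 * RM * (1 + d ^ 2 / σx ^ 2)) :=
    div_nonneg hlog0 hdenpos.le
  have hA : Real.log (s' / sm) / (2 * RM * (1 + d ^ 2 / σx ^ 2)) ≤ 1 / 2 := by
    have := div_le_div₀ hRM.le hlogRM (by positivity : (0:ℝ) < 2 * RM) hden
    calc Real.log (s' / sm) / (2 * RM * (1 + d ^ 2 / σx ^ 2)) ≤ RM / (2 * RM) := this
      _ = 1 / 2 := by field_simp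
  constructor
  · exact mul_nonneg hA0 (by linarith)
  · calc Real.log (s' / sm) / (2 * RM * (1 + d ^ 2 / σx ^ 2)) *
        (1 + Real.tanh (Real.log (s' / s) / σr)) ≤ (1 / 2) * 2 :=
        mul_le_mul hA (by linarith) (by linarith) (by norm_num)
    _ = 1 := by norm_num

lemma cIdx_mem (sm RM σx σr : ℝ) {N : ℕ} (hN : 1 < N)
    (x : Fin N → EuclideanSpace ℝ (Fin 2)) (s : Fin N → ℝ → ℝ) (i : Fin N) (t : ℝ)
    (hsm : 0 < sm) (hRM : 0 < RM) (hσx : 0 < σx)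
    (hbox : ∀ j, sm ≤ s j t ∧ s j t ≤ sm * Real.exp RM) :
    cIdx sm RM σx σr x s i t ∈ Set.Icc (0:ℝ) 1 := by
  have hcard : (Finset.univ.erase i).card = N - 1 := by
    rw [Finset.card_erase_of_mem (Finset.mem_univ i), Finset.card_univ, Fintype.card_fin]
  have hN1 : (0:ℝ) < (N:ℝ) - 1 := by
    have : (1:ℝ) < (N:ℝ) := by exact_mod_cast hN
    linarith
  have hmem : ∀ j ∈ Finset.univ.erase i,
      pot sm RM σx σr (s i t) (s j t) (dist (x i) (x j)) ∈ Set.Icc (0:ℝ) 1 := fun j _ =>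
    pot_mem sm RM σx σr _ _ _ hsm hRM hσx (hbox j).1 (hbox j).2
  have hsum0 : 0 ≤ ∑ j ∈ Finset.univ.erase i,
      pot sm RM σx σr (s i t) (s j t) (dist (x i) (x j)) :=
    Finset.sum_nonneg fun j hj => (hmem j hj).1
  have hsum1 : ∑ j ∈ Finset.univ.erase i,
      pot sm RM σx σr (s i t) (s j t) (dist (x i) (x j)) ≤ (N:ℝ) - 1 := by
    calc _ ≤ (Finset.univ.erase i).card • (1:ℝ) :=
          Finset.sum_le_card_nsmul _ _ 1 fun j hj => (hmem j hj).2
      _ = ((N - 1 : ℕ) : ℝ) := by rw [hcard, nsmul_eq_mul, mul_one]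
      _ = (N:ℝ) - 1 := by
          rw [Nat.cast_sub hN.le]; norm_num
  constructor
  · exact mul_nonneg (by positivity) hsum0
  · rw [cIdx, one_div]
    calc ((N:ℝ) - 1)⁻¹ * ∑ j ∈ Finset.univ.erase i,
          pot sm RM σx σr (s i t) (s j t) (dist (x i) (x j))
        ≤ ((N:ℝ) - 1)⁻¹ * ((N:ℝ) - 1) := by
          exact mul_le_mul_of_nonneg_left hsum1 (by positivity)
      _ = 1 := inv_mul_cancel₀ hN1.ne'

lemma mul_rpow_le_iff {a c y : ℝ} (e : ℝ) (ha : 0 < a) (hc : 0 < c) (hy : 0 < y) :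
    a * c ^ e ≤ y ↔ Real.log a + e * Real.log c ≤ Real.log y := by
  rw [← Real.log_le_log_iff (by positivity) hy, Real.log_mul ha.ne' (by positivity),
    Real.log_rpow hc]

lemma le_mul_rpow_iff {a c y : ℝ} (e : ℝ) (ha : 0 < a) (hc : 0 < c) (hy : 0 < y) :
    y ≤ a * c ^ e ↔ Real.log y ≤ Real.log a + e * Real.log c := by
  rw [← Real.log_le_log_iff hy (by positivity), Real.log_mul ha.ne' (by positivity),
    Real.log_rpow hc]

lemma mono_aux {a b : ℝ} {f f' : ℝ → ℝ} (hab : a ≤ b)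
    (hf : ∀ σ ∈ Icc a b, HasDerivWithinAt f (f' σ) (Icc a b) σ)
    (h0 : ∀ σ ∈ Icc a b, 0 ≤ f' σ) : f a ≤ f b := by
  have cont : ContinuousOn f (Icc a b) := fun σ hσ => (hf σ hσ).continuousWithinAt
  have mono : MonotoneOn f (Icc a b) := by
    apply monotoneOn_of_deriv_nonneg (convex_Icc a b) cont
    · rw [interior_Icc]
      intro σ hσ
      exact ((hf σ (Ioo_subset_Icc_self hσ)).differentiableWithinAt).mono
        Ioo_subset_Icc_self
    · rw [interior_Icc]
      intro σ hσ
      have hD : HasDerivAt f (f' σ) σ :=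
        (hf σ (Ioo_subset_Icc_self hσ)).hasDerivAt (Icc_mem_nhds hσ.1 hσ.2)
      rw [hD.deriv]; exact h0 σ (Ioo_subset_Icc_self hσ)
  exact mono (left_mem_Icc.2 hab) (right_mem_Icc.2 hab) hab

lemma deriv_aux1 {I : Set ℝ} {f : ℝ → ℝ} {D γc c σ : ℝ}
    (hf : HasDerivWithinAt f D I σ) (hpos : 0 < f σ) :
    HasDerivWithinAt (fun τ => Real.exp (γc * τ) * (Real.log (f τ) - c))
      ((Real.exp (γc * σ) * γc) * (Real.log (f σ) - c) + Real.exp (γc * σ) * (D / f σ)) I σ := by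
  have h1 : HasDerivAt (fun τ => Real.exp (γc * τ)) (Real.exp (γc * σ) * γc) σ := by
    simpa using ((hasDerivAt_id σ).const_mul γc).exp
  exact h1.hasDerivWithinAt.mul ((hf.log hpos.ne').sub_const c)

lemma deriv_aux2 {I : Set ℝ} {f : ℝ → ℝ} {D γc c σ : ℝ}
    (hf : HasDerivWithinAt f D I σ) (hpos : 0 < f σ) :
    HasDerivWithinAt (fun τ => Real.exp (γc * τ) * (c - Real.log (f τ)))
      ((Real.exp (γc * σ) * γc) * (c - Real.log (f σ)) + Real.exp (γc * σ) * (-(D / f σ))) I σ := by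
  have h1 : HasDerivAt (fun τ => Real.exp (γc * τ)) (Real.exp (γc * σ) * γc) σ := by
    simpa using ((hasDerivAt_id σ).const_mul γc).exp
  exact h1.hasDerivWithinAt.mul ((hf.log hpos.ne').const_sub c)

/-- sandwich bound `s_m (s_i^0/s_m)^{e^{−γ_i t}} ≤ s_i(t) ≤ S_i (s_i^0/s_m)^{e^{−γ_i t}}`
for the unique global solution of the competition system; in particular `s_m < s_i(t) < S_i`. -/
theorem stmt_2 (sm RM σx σr : ℝ) (hsm : 0 < sm) (hRM : 0 < RM) (hσx : 0 < σx) (hσr : 0 < σr)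
    (N : ℕ) (hN : 1 < N) (s0 Sa γ : Fin N → ℝ) (x : Fin N → EuclideanSpace ℝ (Fin 2))
    (hinit : ∀ i, sm < s0 i ∧ s0 i < Sa i)
    (hS : ∀ i, sm < Sa i ∧ Sa i < sm * Real.exp RM)
    (hγ : ∀ i, 0 < γ i)
    (s : Fin N → ℝ → ℝ) (hs : IsCompetitionSol sm RM σx σr s0 x Sa γ s) :
    ∀ i, ∀ t, 0 ≤ t →
      sm * (s0 i / sm) ^ Real.exp (-(γ i) * t) ≤ s i t ∧
      s i t ≤ Sa i * (s0 i / sm) ^ Real.exp (-(γ i) * t) ∧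
      sm < s i t ∧ s i t < Sa i := by
  have hsm' : sm ≠ 0 := hsm.ne'
  have hSapos : ∀ j, 0 < Sa j := fun j => hsm.trans (hS j).1
  have hs0pos : ∀ j, 0 < s0 j := fun j => hsm.trans (hinit j).1
  have strictbox : ∀ t : ℝ, ∀ j,
      (sm * (s0 j / sm) ^ Real.exp (-(γ j) * t) ≤ s j t ∧
       s j t ≤ Sa j * (s0 j / Sa j) ^ Real.exp (-(γ j) * t)) →
      sm < s j t ∧ s j t < Sa j := by
    rintro t j ⟨hl, hr⟩
    have e1 : 0 < Real.exp (-(γ j) * t) := Real.exp_pos _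
    have b1 : 1 < s0 j / sm := (one_lt_div hsm).2 (hinit j).1
    have r1 : 1 < (s0 j / sm) ^ Real.exp (-(γ j) * t) :=
      (Real.one_lt_rpow_iff_of_pos (div_pos (hs0pos j) hsm)).2 (Or.inl ⟨b1, e1⟩)
    have r2 : (s0 j / Sa j) ^ Real.exp (-(γ j) * t) < 1 :=
      Real.rpow_lt_one (div_pos (hs0pos j) (hSapos j)).le
        ((div_lt_one (hSapos j)).2 (hinit j).2) e1
    constructor
    · nlinarith
    · nlinarith [hSapos j]
  have key : ∀ T : ℝ, 0 ≤ T → Icc 0 T ⊆ {t : ℝ | ∀ j,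
      sm * (s0 j / sm) ^ Real.exp (-(γ j) * t) ≤ s j t ∧
      s j t ≤ Sa j * (s0 j / Sa j) ^ Real.exp (-(γ j) * t)} := by
    intro T hT
    apply IsClosed.Icc_subset_of_forall_exists_gt
    · -- closedness
      have hcont : ∀ j, ContinuousOn (s j) (Icc 0 T) := fun j σ hσ =>
        ((hs j).2 σ hσ.1).continuousWithinAt.mono Icc_subset_Ici_self
      have hbar : ∀ a c g0 : ℝ, 0 < c →
          Continuous (fun τ : ℝ => a * c ^ Real.exp (-g0 * τ)) := by
        intro a c g0 hc
        exact continuous_const.mul (Continuous.rpow continuous_const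
          (by continuity) fun τ => Or.inl hc.ne')
      have heq : {t : ℝ | ∀ j,
          sm * (s0 j / sm) ^ Real.exp (-(γ j) * t) ≤ s j t ∧
          s j t ≤ Sa j * (s0 j / Sa j) ^ Real.exp (-(γ j) * t)} ∩ Icc 0 T =
          ⋂ j : Fin N,
          ((Icc 0 T ∩ (fun τ => s j τ - sm * (s0 j / sm) ^ Real.exp (-(γ j) * τ)) ⁻¹' Ici 0) ∩
           (Icc 0 T ∩ (fun τ => Sa j * (s0 j / Sa j) ^ Real.exp (-(γ j) * τ) - s j τ) ⁻¹' Ici 0))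
          := by
        ext τ
        simp only [mem_inter_iff, mem_setOf_eq, mem_iInter, mem_preimage, mem_Ici, sub_nonneg]
        constructor
        · rintro ⟨hG, hT'⟩ j; exact ⟨⟨hT', (hG j).1⟩, hT', (hG j).2⟩
        · intro h
          exact ⟨fun j => ⟨(h j).1.2, (h j).2.2⟩, (h ⟨0, by omega⟩).1.1⟩
      rw [heq]
      refine isClosed_iInter fun j => IsClosed.inter ?_ ?_
      · exact ContinuousOn.preimage_isClosed_of_isClosed
          ((hcont j).sub ((hbar sm (s0 j / sm) (γ j) (div_pos (hs0pos j) hsm)).continuousOn))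
          isClosed_Icc isClosed_Ici
      · exact ContinuousOn.preimage_isClosed_of_isClosed
          (((hbar (Sa j) (s0 j / Sa j) (γ j)
            (div_pos (hs0pos j) (hSapos j))).continuousOn).sub (hcont j))
          isClosed_Icc isClosed_Ici
    · -- 0 is in the set
      intro j
      have e0 : Real.exp (-(γ j) * 0) = 1 := by norm_num
      rw [(hs j).1, e0, Real.rpow_one, Real.rpow_one]
      constructor
      · exact le_of_eq (by field_simp)
      · exact le_of_eq (by rw [mul_comm, div_mul_cancel₀ _ (hSapos j).ne'])
    · -- step
      rintro τ ⟨hGτ, hτ0, hτT⟩ y hy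
      have hev : ∀ᶠ σ in nhdsWithin τ (Ici (0:ℝ)), ∀ j, sm < s j σ ∧ s j σ < Sa j := by
        rw [Filter.eventually_all]
        intro j
        have hc := ((hs j).2 τ hτ0).continuousWithinAt
        have e1 : ∀ᶠ σ in nhdsWithin τ (Ici (0:ℝ)), sm < s j σ :=
          hc (Ioi_mem_nhds (strictbox τ j (hGτ j)).1)
        have e2 : ∀ᶠ σ in nhdsWithin τ (Ici (0:ℝ)), s j σ < Sa j :=
          hc (Iio_mem_nhds (strictbox τ j (hGτ j)).2)
        exact e1.and e2
      have hev2 : {σ : ℝ | ∀ j, sm < s j σ ∧ s j σ < Sa j} ∈ nhdsWithin τ (Ici τ) :=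
        nhdsWithin_mono τ (Ici_subset_Ici.2 hτ0) hev
      obtain ⟨u, hu, hIcc⟩ := mem_nhdsGE_iff_exists_Icc_subset.1 hev2
      set t' := min u y with ht'def
      have hτt' : τ < t' := lt_min hu hy
      have hbox : ∀ σ ∈ Icc τ t', ∀ k, sm < s k σ ∧ s k σ < Sa k :=
        fun σ hσ => hIcc ⟨hσ.1, hσ.2.trans (min_le_left _ _)⟩
      have hIci : Icc τ t' ⊆ Ici (0:ℝ) := fun σ hσ => le_trans hτ0 hσ.1
      have ht'mem : t' ∈ Icc τ t' := right_mem_Icc.2 hτt'.le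
      refine ⟨t', ?_, hτt', min_le_right _ _⟩
      intro j
      have hγj := hγ j
      have hsτpos : ∀ σ ∈ Icc τ t', 0 < s j σ := fun σ hσ => hsm.trans (hbox σ hσ j).1
      have hCmem : ∀ σ ∈ Icc τ t', cIdx sm RM σx σr x s j σ ∈ Set.Icc (0:ℝ) 1 := fun σ hσ =>
        cIdx_mem sm RM σx σr hN x s j σ hsm hRM hσx fun k =>
          ⟨(hbox σ hσ k).1.le, ((hbox σ hσ k).2.trans (hS k).2).le⟩
      have hLq : 0 < Real.log (Sa j / sm) := Real.log_pos ((one_lt_div hsm).2 (hS j).1)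
      have hder : ∀ σ ∈ Icc τ t', HasDerivWithinAt (s j)
          (γ j * s j σ * (Real.log (Sa j / sm) * (1 - cIdx sm RM σx σr x s j σ)
            - Real.log (s j σ / sm))) (Icc τ t') σ :=
        fun σ hσ => ((hs j).2 σ (hIci hσ)).mono hIci
      have hDdiv : ∀ σ ∈ Icc τ t',
          γ j * s j σ * (Real.log (Sa j / sm) * (1 - cIdx sm RM σx σr x s j σ)
            - Real.log (s j σ / sm)) / s j σ
          = γ j * (Real.log (Sa j / sm) * (1 - cIdx sm RM σx σr x s j σ)
            - (Real.log (s j σ) - Real.log sm)) := by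
        intro σ hσ
        rw [Real.log_div (hsτpos σ hσ).ne' hsm', div_eq_iff (hsτpos σ hσ).ne']
        ring
      -- monotone lower barrier functional
      have hg : Real.exp (γ j * τ) * (Real.log (s j τ) - Real.log sm) ≤
          Real.exp (γ j * t') * (Real.log (s j t') - Real.log sm) := by
        apply mono_aux (f' := fun σ => Real.exp (γ j * σ) *
            (γ j * (Real.log (Sa j / sm) * (1 - cIdx sm RM σx σr x s j σ)))) hτt'.le
        · intro σ hσ
          have h1 := deriv_aux1 (c := Real.log sm) (γc := γ j) (hder σ hσ) (hsτpos σ hσ)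
          convert h1 using 1
          rw [hDdiv σ hσ]; ring
        · intro σ hσ
          have hC := (hCmem σ hσ).2
          have hnn : 0 ≤ Real.log (Sa j / sm) * (1 - cIdx sm RM σx σr x s j σ) := by nlinarith
          exact mul_nonneg (Real.exp_pos _).le (mul_nonneg hγj.le hnn)
      -- monotone upper barrier functional
      have hh : Real.exp (γ j * τ) * (Real.log (Sa j) - Real.log (s j τ)) ≤
          Real.exp (γ j * t') * (Real.log (Sa j) - Real.log (s j t')) := by
        apply mono_aux (f' := fun σ => Real.exp (γ j * σ) *
            (γ j * (Real.log (Sa j / sm) * cIdx sm RM σx σr x s j σ))) hτt'.le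
        · intro σ hσ
          have h1 := deriv_aux2 (c := Real.log (Sa j)) (γc := γ j) (hder σ hσ) (hsτpos σ hσ)
          convert h1 using 1
          rw [hDdiv σ hσ, Real.log_div (hSapos j).ne' hsm']; ring
        · intro σ hσ
          have hC := (hCmem σ hσ).1
          exact mul_nonneg (Real.exp_pos _).le
            (mul_nonneg hγj.le (mul_nonneg hLq.le hC))
      -- translate back to rpow form
      have hsτ : 0 < s j τ := hsτpos τ (left_mem_Icc.2 hτt'.le)
      have hst' : 0 < s j t' := hsτpos t' ht'mem
      have hlog0 : Real.log (s0 j / sm) = Real.log (s0 j) - Real.log sm :=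
        Real.log_div (hs0pos j).ne' hsm'
      have hlog1 : Real.log (s0 j / Sa j) = Real.log (s0 j) - Real.log (Sa j) :=
        Real.log_div (hs0pos j).ne' (hSapos j).ne'
      have hexpinv : ∀ r : ℝ, Real.exp (γ j * r) * Real.exp (-(γ j) * r) = 1 := by
        intro r
        rw [← Real.exp_add, show γ j * r + -(γ j) * r = 0 by ring, Real.exp_zero]
      have hexpinv' : ∀ r : ℝ, Real.exp (-(γ j) * r) * Real.exp (γ j * r) = 1 := by
        intro r; rw [mul_comm]; exact hexpinv r
      constructor
      · -- lower bound at t'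
        have hlτ := (mul_rpow_le_iff (Real.exp (-(γ j) * τ)) hsm
          (div_pos (hs0pos j) hsm) hsτ).1 (hGτ j).1
        rw [hlog0] at hlτ
        -- u0 ≤ g τ
        have h1 : Real.log (s0 j) - Real.log sm ≤
            Real.exp (γ j * τ) * (Real.log (s j τ) - Real.log sm) := by
          calc Real.log (s0 j) - Real.log sm
              = Real.exp (γ j * τ) * (Real.exp (-(γ j) * τ) *
                  (Real.log (s0 j) - Real.log sm)) := by
                rw [← mul_assoc, hexpinv τ, one_mul]
            _ ≤ Real.exp (γ j * τ) * (Real.log (s j τ) - Real.log sm) := by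
                apply mul_le_mul_of_nonneg_left _ (Real.exp_pos _).le
                linarith
        have h2 : Real.log (s0 j) - Real.log sm ≤
            Real.exp (γ j * t') * (Real.log (s j t') - Real.log sm) := h1.trans hg
        have h3 : Real.exp (-(γ j) * t') * (Real.log (s0 j) - Real.log sm) ≤
            Real.log (s j t') - Real.log sm := by
          calc Real.exp (-(γ j) * t') * (Real.log (s0 j) - Real.log sm)
              ≤ Real.exp (-(γ j) * t') * (Real.exp (γ j * t') *
                  (Real.log (s j t') - Real.log sm)) :=
                mul_le_mul_of_nonneg_left h2 (Real.exp_pos _).le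
            _ = Real.log (s j t') - Real.log sm := by rw [← mul_assoc, hexpinv' t', one_mul]
        rw [mul_rpow_le_iff (Real.exp (-(γ j) * t')) hsm (div_pos (hs0pos j) hsm) hst', hlog0]
        linarith
      · -- upper bound at t'
        have hlτ := (le_mul_rpow_iff (Real.exp (-(γ j) * τ)) (hSapos j)
          (div_pos (hs0pos j) (hSapos j)) hsτ).1 (hGτ j).2
        rw [hlog1] at hlτ
        have h1 : Real.log (Sa j) - Real.log (s0 j) ≤
            Real.exp (γ j * τ) * (Real.log (Sa j) - Real.log (s j τ)) := by
          calc Real.log (Sa j) - Real.log (s0 j)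
              = Real.exp (γ j * τ) * (Real.exp (-(γ j) * τ) *
                  (Real.log (Sa j) - Real.log (s0 j))) := by
                rw [← mul_assoc, hexpinv τ, one_mul]
            _ ≤ Real.exp (γ j * τ) * (Real.log (Sa j) - Real.log (s j τ)) := by
                apply mul_le_mul_of_nonneg_left _ (Real.exp_pos _).le
                nlinarith [Real.exp_pos (-(γ j) * τ)]
        have h2 : Real.log (Sa j) - Real.log (s0 j) ≤
            Real.exp (γ j * t') * (Real.log (Sa j) - Real.log (s j t')) := h1.trans hh
        have h3 : Real.exp (-(γ j) * t') * (Real.log (Sa j) - Real.log (s0 j)) ≤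
            Real.log (Sa j) - Real.log (s j t') := by
          calc Real.exp (-(γ j) * t') * (Real.log (Sa j) - Real.log (s0 j))
              ≤ Real.exp (-(γ j) * t') * (Real.exp (γ j * t') *
                  (Real.log (Sa j) - Real.log (s j t'))) :=
                mul_le_mul_of_nonneg_left h2 (Real.exp_pos _).le
            _ = Real.log (Sa j) - Real.log (s j t') := by rw [← mul_assoc, hexpinv' t', one_mul]
        rw [le_mul_rpow_iff (Real.exp (-(γ j) * t')) (hSapos j)
          (div_pos (hs0pos j) (hSapos j)) hst', hlog1]
        nlinarith [Real.exp_pos (-(γ j) * t')]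
  -- conclude
  intro i t ht
  obtain ⟨h1, h2⟩ := key t ht ⟨ht, le_refl t⟩ i
  have e1 : 0 < Real.exp (-(γ i) * t) := Real.exp_pos _
  have b1 : 1 < s0 i / sm := (one_lt_div hsm).2 (hinit i).1
  have r1 : 1 < (s0 i / sm) ^ Real.exp (-(γ i) * t) :=
    (Real.one_lt_rpow_iff_of_pos (div_pos (hs0pos i) hsm)).2 (Or.inl ⟨b1, e1⟩)
  have r2 : (s0 i / Sa i) ^ Real.exp (-(γ i) * t) < 1 :=
    Real.rpow_lt_one (div_pos (hs0pos i) (hSapos i)).le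
      ((div_lt_one (hSapos i)).2 (hinit i).2) e1
  have hlt : s i t < Sa i := by nlinarith [hSapos i]
  refine ⟨h1, ?_, by nlinarith, hlt⟩
  nlinarith [hSapos i]
end
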